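/- Let R(u) = 216(u-1)³/((u+1)²(9u² - 10u + 17)) and w(u) = 10/9 - u. Then the pair (t, s) = (R(u), R(w(u))) satisfies, as an identity of rational functions of u, the quartic relation t(25t + 192)³ + (7077888 + 2908160t - 12612480t² + 1674720t³ - 36750t⁴)s + (2764800 - 12612480t + 8025390t² - 798210t³ + 21609t⁴)s² + (360000 + 1674720t - 798210t² + 33614t³)s³ + (147t - 125)²s⁴ = 0. -/

import Mathlib

set_option maxHeartbeats 1000000

/-- With `R(u) = 216(u-1)³/((u+1)²(9u² - 10u + 17))` and `w(u) = 10/9 - u`, the pair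
`(t, s) = (R(u), R(w(u)))` satisfies the level-3 modular equation for `X₁₀*(1)`, as an
identity of rational functions of `u`. -/
theorem modular_equation_level3_X10 (u : ℚ) (h1 : u ≠ -1) (h2 : u ≠ 19 / 9) :
    let R : ℚ → ℚ := fun x => 216 * (x - 1) ^ 3 / ((x + 1) ^ 2 * (9 * x ^ 2 - 10 * x + 17))
    let t := R u
    let s := R (10 / 9 - u)
    t * (25 * t + 192) ^ 3
      + (7077888 + 2908160 * t - 12612480 * t ^ 2 + 1674720 * t ^ 3 - 36750 * t ^ 4) * s
      + (2764800 - 12612480 * t + 8025390 * t ^ 2 - 798210 * t ^ 3 + 21609 * t ^ 4) * s ^ 2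
      + (360000 + 1674720 * t - 798210 * t ^ 2 + 33614 * t ^ 3) * s ^ 3
      + (147 * t - 125) ^ 2 * s ^ 4 = 0 := by
  intro R t s
  set q : ℚ := 9 * u ^ 2 - 10 * u + 17 with hq
  have hqne : q ≠ 0 := by
    rw [hq]; nlinarith [sq_nonneg (3 * u - 5 / 3)]
  set N1 : ℚ := 216 * (u - 1) ^ 3 with hN1
  set D1 : ℚ := (u + 1) ^ 2 * q with hD1
  set N2 : ℚ := 216 * (1 / 9 - u) ^ 3 with hN2
  set D2 : ℚ := (19 / 9 - u) ^ 2 * q with hD2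
  clear_value N1 D1 N2 D2 q
  have hd1 : D1 ≠ 0 := by
    rw [hD1]
    exact mul_ne_zero (pow_ne_zero _ (fun h => h1 (by linarith))) hqne
  have hd2 : D2 ≠ 0 := by
    rw [hD2]
    exact mul_ne_zero (pow_ne_zero _ (fun h => h2 (by linarith))) hqne
  have ht : t = N1 / D1 := by rw [hN1, hD1, hq]
  have hs : s = N2 / D2 := by
    show (216 * ((10 / 9 - u) - 1) ^ 3) / (((10 / 9 - u) + 1) ^ 2 *
        (9 * (10 / 9 - u) ^ 2 - 10 * (10 / 9 - u) + 17)) = N2 / D2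
    rw [hN2, hD2, hq]
    congr 1 <;> ring
  have key : N1*(25*N1+192*D1)^3*D2^4
      + (7077888*D1^4+2908160*N1*D1^3-12612480*N1^2*D1^2+1674720*N1^3*D1-36750*N1^4)*N2*D2^3
      + (2764800*D1^4-12612480*N1*D1^3+8025390*N1^2*D1^2-798210*N1^3*D1+21609*N1^4)*N2^2*D2^2
      + (360000*D1^4+1674720*N1*D1^3-798210*N1^2*D1^2+33614*N1^3*D1)*N2^3*D2
      + (147*N1-125*D1)^2*D1^2*N2^4 = 0 := by
    rw [hN1, hD1, hN2, hD2, hq]; ring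
  rw [ht, hs]
  field_simp
  linear_combination key
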